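/- Let V₁,…,V_n be vectors in ℝ^n and write ε(A₁,…,A_m; B₁,…,B_m) = det((A_i·B_j)_{i,j=1}^m). Then for indices μ, ν and r (with r+1,…,n valid indices), ε(V_μ, V_r, …, V_n; V_ν, V_r, …, V_n) · ε(V_{r+1}, …, V_n; V_{r+1}, …, V_n) = ε(V_μ, V_{r+1}, …, V_n; V_ν, V_{r+1}, …, V_n) · ε(V_r, …, V_n; V_r, …, V_n) − ε(V_μ, V_{r+1}, …, V_n; V_r, …, V_n) · ε(V_ν, V_{r+1}, …, V_n; V_r, …, V_n). -/

import Mathlib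

open Matrix

-- key multiplied identity, any CommRing
lemma dj_mul {R : Type*} [CommRing R] (m : ℕ) (M : Matrix (Fin (m+2)) (Fin (m+2)) R) :
    M.det * ((adjugate M 0 0) * (adjugate M 1 1) - (adjugate M 0 1) * (adjugate M 1 0))
      = M.det * (M.det *
        (M.submatrix (fun i : Fin m => (⟨(i:ℕ)+2, by omega⟩ : Fin (m+2)))
          (fun j : Fin m => (⟨(j:ℕ)+2, by omega⟩ : Fin (m+2)))).det) := by
  classical
  set e : Fin 2 ⊕ Fin m ≃ Fin (m+2) :=
    finSumFinEquiv.trans (finCongr (Nat.add_comm 2 m)) with he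
  set A : Matrix (Fin 2 ⊕ Fin m) (Fin 2 ⊕ Fin m) R := M.submatrix e e with hA
  set P : Matrix (Fin 2) (Fin 2) R := fun i j => adjugate A (Sum.inl i) (Sum.inl j) with hP
  set Q : Matrix (Fin m) (Fin 2) R := fun i j => adjugate A (Sum.inr i) (Sum.inl j) with hQ
  set X : Matrix (Fin 2 ⊕ Fin m) (Fin 2 ⊕ Fin m) R := fromBlocks P 0 Q 1 with hX
  have hAX : A * X = fromBlocks (A.det • (1 : Matrix (Fin 2) (Fin 2) R)) (A.toBlocks₁₂)
      0 (A.toBlocks₂₂) := by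
    have hadj := Matrix.mul_adjugate A
    ext i j
    rcases j with j | j
    · have : (A * X) i (Sum.inl j) = (A * adjugate A) i (Sum.inl j) := by
        simp [Matrix.mul_apply, hX, hP, hQ, Fintype.sum_sum_type, fromBlocks]
      rw [this, hadj]
      rcases i with i | i <;> simp [fromBlocks, Matrix.one_apply, Matrix.smul_apply]
    · rcases i with i | i <;>
        simp [Matrix.mul_apply, hX, Fintype.sum_sum_type, fromBlocks, toBlocks₁₂, toBlocks₂₂,
          Matrix.one_apply]
  have hdetX : X.det = P.det := by
    rw [hX, det_fromBlocks_zero₁₂, det_one, mul_one]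
  have h1 : A.det * X.det = A.det ^ 2 * (A.toBlocks₂₂).det := by
    rw [← det_mul, hAX, det_fromBlocks_zero₂₁, det_smul, det_one, mul_one, Fintype.card_fin]
  have hAdet : A.det = M.det := det_submatrix_equiv_self e M
  have hei : ∀ i : Fin 2, e (Sum.inl i) = (⟨i.1, by omega⟩ : Fin (m+2)) := by
    intro i
    apply Fin.ext
    simp [he, finSumFinEquiv]
  have heri : ∀ i : Fin m, e (Sum.inr i) = (⟨(i:ℕ)+2, by omega⟩ : Fin (m+2)) := by
    intro i
    apply Fin.ext
    simp [he, finSumFinEquiv]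
  have hPe : ∀ i j : Fin 2, P i j = adjugate M (⟨i.1, by omega⟩ : Fin (m+2)) ⟨j.1, by omega⟩ := by
    intro i j
    rw [hP]
    show adjugate A (Sum.inl i) (Sum.inl j) = _
    rw [hA, adjugate_submatrix_equiv_self]
    simp [hei]
  have hPdet : P.det = adjugate M 0 0 * adjugate M 1 1 - adjugate M 0 1 * adjugate M 1 0 := by
    rw [det_fin_two, hPe, hPe, hPe, hPe]
    norm_num
  have hB : A.toBlocks₂₂ = M.submatrix (fun i : Fin m => (⟨(i:ℕ)+2, by omega⟩ : Fin (m+2)))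
      (fun j : Fin m => (⟨(j:ℕ)+2, by omega⟩ : Fin (m+2))) := by
    ext i j
    simp [toBlocks₂₂, hA, heri]
  calc M.det * (adjugate M 0 0 * adjugate M 1 1 - adjugate M 0 1 * adjugate M 1 0)
      = A.det * P.det := by rw [hAdet, hPdet]
    _ = A.det * X.det := by rw [hdetX]
    _ = A.det ^ 2 * (A.toBlocks₂₂).det := h1
    _ = _ := by rw [hAdet, hB]; ring

lemma dj_adj {R : Type*} [CommRing R] (m : ℕ) (M : Matrix (Fin (m+2)) (Fin (m+2)) R) :
    adjugate M 0 0 * adjugate M 1 1 - adjugate M 0 1 * adjugate M 1 0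
      = M.det * (M.submatrix (fun i : Fin m => (⟨(i:ℕ)+2, by omega⟩ : Fin (m+2)))
          (fun j : Fin m => (⟨(j:ℕ)+2, by omega⟩ : Fin (m+2)))).det := by
  let A' := mvPolynomialX (Fin (m+2)) (Fin (m+2)) ℤ
  have key : adjugate A' 0 0 * adjugate A' 1 1 - adjugate A' 0 1 * adjugate A' 1 0
      = A'.det * (A'.submatrix (fun i : Fin m => (⟨(i:ℕ)+2, by omega⟩ : Fin (m+2)))
          (fun j : Fin m => (⟨(j:ℕ)+2, by omega⟩ : Fin (m+2)))).det :=
    mul_left_cancel₀ (det_mvPolynomialX_ne_zero _ ℤ) (dj_mul m A')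
  let f := (MvPolynomial.aeval fun p : Fin (m+2) × Fin (m+2) => M p.1 p.2 :
      MvPolynomial (Fin (m+2) × Fin (m+2)) ℤ →ₐ[ℤ] R)
  have hM : f.mapMatrix A' = M := mvPolynomialX_mapMatrix_aeval ℤ M
  have h1 : ∀ i j, f (adjugate A' i j) = adjugate M i j := by
    intro i j
    rw [← hM, ← AlgHom.map_adjugate]
    rfl
  have h2 : f A'.det = M.det := by
    rw [← hM, ← AlgHom.map_det]
  have h3 : f (A'.submatrix (fun i : Fin m => (⟨(i:ℕ)+2, by omega⟩ : Fin (m+2)))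
        (fun j : Fin m => (⟨(j:ℕ)+2, by omega⟩ : Fin (m+2)))).det
      = (M.submatrix (fun i : Fin m => (⟨(i:ℕ)+2, by omega⟩ : Fin (m+2)))
          (fun j : Fin m => (⟨(j:ℕ)+2, by omega⟩ : Fin (m+2)))).det := by
    rw [← hM, AlgHom.mapMatrix_apply, submatrix_map, ← AlgHom.mapMatrix_apply,
      ← AlgHom.map_det]
  have := congrArg f key
  simpa [_root_.map_mul, _root_.map_sub, h1, h2, h3] using this

lemma dj {R : Type*} [CommRing R] (m : ℕ) (M : Matrix (Fin (m+2)) (Fin (m+2)) R) :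
    M.det * (M.submatrix (fun i : Fin m => (⟨(i:ℕ)+2, by omega⟩ : Fin (m+2)))
        (fun j : Fin m => (⟨(j:ℕ)+2, by omega⟩ : Fin (m+2)))).det
      = (M.submatrix (Fin.succAbove 0) (Fin.succAbove 0)).det *
          (M.submatrix (Fin.succAbove 1) (Fin.succAbove 1)).det
        - (M.submatrix (Fin.succAbove 1) (Fin.succAbove 0)).det *
          (M.submatrix (Fin.succAbove 0) (Fin.succAbove 1)).det := by
  rw [← dj_adj]
  rw [adjugate_fin_succ_eq_det_submatrix, adjugate_fin_succ_eq_det_submatrix,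
    adjugate_fin_succ_eq_det_submatrix, adjugate_fin_succ_eq_det_submatrix]
  simp

/-- Telescoping Gram-determinant identity (eqn (telescope) of the paper), with
`ε(A₁,…,A_m; B₁,…,B_m) = det((Aᵢ·Bⱼ))`. Indices are 0-indexed: the lists `V_r,…,V_n` of
the paper become `V r, …, V (n-1)` here. -/
theorem stmt_14 (n : ℕ) (V : Fin n → Fin n → ℝ) (μ ν : Fin n) (r : ℕ) (hr : r < n) :
    (Matrix.of fun i j : Fin (n - r + 1) =>
        ∑ t : Fin n,
          V (if i.1 = 0 then μ else ⟨r + i.1 - 1, by have := i.2; omega⟩) t *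
          V (if j.1 = 0 then ν else ⟨r + j.1 - 1, by have := j.2; omega⟩) t).det *
      (Matrix.of fun i j : Fin (n - (r + 1)) =>
        ∑ t : Fin n,
          V ⟨r + 1 + i.1, by have := i.2; omega⟩ t *
          V ⟨r + 1 + j.1, by have := j.2; omega⟩ t).det =
    (Matrix.of fun i j : Fin (n - r) =>
        ∑ t : Fin n,
          V (if i.1 = 0 then μ else ⟨r + i.1, by have := i.2; omega⟩) t *
          V (if j.1 = 0 then ν else ⟨r + j.1, by have := j.2; omega⟩) t).det *
      (Matrix.of fun i j : Fin (n - r) =>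
        ∑ t : Fin n,
          V ⟨r + i.1, by have := i.2; omega⟩ t *
          V ⟨r + j.1, by have := j.2; omega⟩ t).det -
    (Matrix.of fun i j : Fin (n - r) =>
        ∑ t : Fin n,
          V (if i.1 = 0 then μ else ⟨r + i.1, by have := i.2; omega⟩) t *
          V ⟨r + j.1, by have := j.2; omega⟩ t).det *
      (Matrix.of fun i j : Fin (n - r) =>
        ∑ t : Fin n,
          V (if i.1 = 0 then ν else ⟨r + i.1, by have := i.2; omega⟩) t *
          V ⟨r + j.1, by have := j.2; omega⟩ t).det := by
  have hrn : r < n := hr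
  set m := n - (r + 1) with hm
  have hr1 : n - r + 1 = m + 2 := by omega
  have hr2 : n - r = m + 1 := by omega
  set row : Fin (m + 2) → Fin n := fun i =>
    if i.1 = 0 then μ else ⟨r + i.1 - 1, by have := i.2; omega⟩ with hrow
  set col : Fin (m + 2) → Fin n := fun j =>
    if j.1 = 0 then ν else ⟨r + j.1 - 1, by have := j.2; omega⟩ with hcol
  set M : Matrix (Fin (m + 2)) (Fin (m + 2)) ℝ :=
    Matrix.of (fun i j => ∑ t : Fin n, V (row i) t * V (col j) t) with hM
  -- index computations
  have hs0 : ∀ i : Fin (m + 1), ((Fin.succAbove 0 i : Fin (m + 2)) : ℕ) = i.1 + 1 := by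
    intro i; simp [Fin.succAbove]
  have hs1 : ∀ i : Fin (m + 1),
      ((Fin.succAbove 1 i : Fin (m + 2)) : ℕ) = if i.1 = 0 then 0 else i.1 + 1 := by
    intro i
    by_cases h : i.1 = 0 <;> simp [Fin.succAbove, Fin.lt_def, h]
  have frow0 : ∀ i : Fin (m + 1),
      row (Fin.succAbove 0 i) = ⟨r + i.1, by have := i.2; omega⟩ := by
    intro i
    have h := hs0 i
    rw [hrow]
    simp only []
    rw [if_neg (by omega)]
    simp only [Fin.mk.injEq, h]
    omega
  have fcol0 : ∀ i : Fin (m + 1),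
      col (Fin.succAbove 0 i) = ⟨r + i.1, by have := i.2; omega⟩ := by
    intro i
    have h := hs0 i
    rw [hcol]
    simp only []
    rw [if_neg (by omega)]
    simp only [Fin.mk.injEq, h]
    omega
  have frow1 : ∀ i : Fin (m + 1),
      row (Fin.succAbove 1 i) = if i.1 = 0 then μ else ⟨r + i.1, by have := i.2; omega⟩ := by
    intro i
    rw [hrow]
    simp only []
    by_cases hi : i.1 = 0
    · have hv : ((Fin.succAbove 1 i : Fin (m + 2)) : ℕ) = 0 := by rw [hs1 i, if_pos hi]
      rw [if_pos hv, if_pos hi]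
    · have hv : ((Fin.succAbove 1 i : Fin (m + 2)) : ℕ) = i.1 + 1 := by rw [hs1 i, if_neg hi]
      rw [if_neg (by omega), if_neg hi]
      simp only [Fin.mk.injEq, hv]
      omega
  have fcol1 : ∀ i : Fin (m + 1),
      col (Fin.succAbove 1 i) = if i.1 = 0 then ν else ⟨r + i.1, by have := i.2; omega⟩ := by
    intro i
    rw [hcol]
    simp only []
    by_cases hi : i.1 = 0
    · have hv : ((Fin.succAbove 1 i : Fin (m + 2)) : ℕ) = 0 := by rw [hs1 i, if_pos hi]
      rw [if_pos hv, if_pos hi]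
    · have hv : ((Fin.succAbove 1 i : Fin (m + 2)) : ℕ) = i.1 + 1 := by rw [hs1 i, if_neg hi]
      rw [if_neg (by omega), if_neg hi]
      simp only [Fin.mk.injEq, hv]
      omega
  have frow2 : ∀ i : Fin m,
      row ⟨(i : ℕ) + 2, by omega⟩ = ⟨r + 1 + i.1, by have := i.2; omega⟩ := by
    intro i
    rw [hrow]
    simp only []
    rw [if_neg (by omega)]
    simp only [Fin.mk.injEq]
    omega
  have fcol2 : ∀ i : Fin m,
      col ⟨(i : ℕ) + 2, by omega⟩ = ⟨r + 1 + i.1, by have := i.2; omega⟩ := by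
    intro i
    rw [hcol]
    simp only []
    rw [if_neg (by omega)]
    simp only [Fin.mk.injEq]
    omega
  -- the six determinant identifications
  have E1 : (Matrix.of fun i j : Fin (n - r + 1) =>
        ∑ t : Fin n,
          V (if i.1 = 0 then μ else ⟨r + i.1 - 1, by have := i.2; omega⟩) t *
          V (if j.1 = 0 then ν else ⟨r + j.1 - 1, by have := j.2; omega⟩) t).det = M.det := by
    rw [← Matrix.det_submatrix_equiv_self (finCongr hr1) M]
    congr 1
    all_goals ext i j
    all_goals rfl
  have E2 : (Matrix.of fun i j : Fin m =>
        ∑ t : Fin n,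
          V ⟨r + 1 + i.1, by have := i.2; omega⟩ t *
          V ⟨r + 1 + j.1, by have := j.2; omega⟩ t).det
      = (M.submatrix (fun i : Fin m => (⟨(i : ℕ) + 2, by omega⟩ : Fin (m + 2)))
          (fun j : Fin m => (⟨(j : ℕ) + 2, by omega⟩ : Fin (m + 2)))).det := by
    congr 1
    all_goals ext i j
    all_goals simp only [hM, Matrix.submatrix_apply, Matrix.of_apply, frow2, fcol2]
  have E3 : (Matrix.of fun i j : Fin (n - r) =>
        ∑ t : Fin n,
          V (if i.1 = 0 then μ else ⟨r + i.1, by have := i.2; omega⟩) t *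
          V (if j.1 = 0 then ν else ⟨r + j.1, by have := j.2; omega⟩) t).det
      = (M.submatrix (Fin.succAbove 1) (Fin.succAbove 1)).det := by
    rw [← Matrix.det_submatrix_equiv_self (finCongr hr2)]
    congr 1
    all_goals ext i j
    all_goals simp only [hM, Matrix.submatrix_apply, Matrix.of_apply, finCongr_apply, Fin.coe_cast,
      frow1, fcol1, Fin.coe_cast]
  have E4 : (Matrix.of fun i j : Fin (n - r) =>
        ∑ t : Fin n,
          V ⟨r + i.1, by have := i.2; omega⟩ t *
          V ⟨r + j.1, by have := j.2; omega⟩ t).det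
      = (M.submatrix (Fin.succAbove 0) (Fin.succAbove 0)).det := by
    rw [← Matrix.det_submatrix_equiv_self (finCongr hr2)]
    congr 1
    all_goals ext i j
    all_goals simp only [hM, Matrix.submatrix_apply, Matrix.of_apply, finCongr_apply, Fin.coe_cast,
      frow0, fcol0, Fin.coe_cast]
  have E5 : (Matrix.of fun i j : Fin (n - r) =>
        ∑ t : Fin n,
          V (if i.1 = 0 then μ else ⟨r + i.1, by have := i.2; omega⟩) t *
          V ⟨r + j.1, by have := j.2; omega⟩ t).det
      = (M.submatrix (Fin.succAbove 1) (Fin.succAbove 0)).det := by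
    rw [← Matrix.det_submatrix_equiv_self (finCongr hr2)]
    congr 1
    all_goals ext i j
    all_goals simp only [hM, Matrix.submatrix_apply, Matrix.of_apply, finCongr_apply, Fin.coe_cast,
      frow1, fcol0, Fin.coe_cast]
  have E6 : (Matrix.of fun i j : Fin (n - r) =>
        ∑ t : Fin n,
          V (if i.1 = 0 then ν else ⟨r + i.1, by have := i.2; omega⟩) t *
          V ⟨r + j.1, by have := j.2; omega⟩ t).det
      = (M.submatrix (Fin.succAbove 0) (Fin.succAbove 1)).det := by
    rw [← Matrix.det_transpose (M.submatrix (Fin.succAbove 0) (Fin.succAbove 1))]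
    rw [← Matrix.det_submatrix_equiv_self (finCongr hr2)]
    congr 1
    all_goals ext i j
    all_goals simp only [hM, Matrix.submatrix_apply, Matrix.transpose_apply, Matrix.of_apply,
      finCongr_apply, Fin.coe_cast, frow0, fcol1, Fin.coe_cast]
    exact Finset.sum_congr rfl fun t _ => mul_comm _ _
  rw [E1, E2, E3, E4, E5, E6, dj m M]
  ring
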